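/- For every positive integer n, the following identity holds in ℚ(u,v): D_n(u,v) = −( v^{1−n} / ∏_{e ∣ n, e ≠ n} (r_e − 1) ) · Σ_Q (−1)^{#Q} · Inv_Q θ (1, n; u) · ∏_{e ∣ n, e ∉ Q} r_e, where the sum runs over all subsets Q of the set of divisors of n with 1, n ∈ Q, and r_e = u^{n−e} v^{1 − n/e}. -/

import Mathlib

open Finset ArithmeticFunction

/-- The rational functions `D_n(u,v)` from the paper, defined by `D_1 = 1` and the recursion
`D_n(u,v) = (u^(n-1) - v^(n-1))⁻¹ * Σ_{1 ≠ d ∣ n} v^(n/d - 1) (Σ_{e ∣ d} μ(d/e) u^(e-1)) D_{n/d}(u^d, v)`. -/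
noncomputable def Dfun {K : Type*} [Field K] : ℕ → K → K → K
  | 0, _, _ => 1
  | 1, _, _ => 1
  | (n+2), u, v =>
    (u ^ (n+1) - v ^ (n+1))⁻¹ *
      ∑ d ∈ ((n+2 : ℕ).divisors.erase 1).attach,
        v ^ ((n+2) / d.1 - 1) *
          (∑ e ∈ (d.1).divisors, ((moebius (d.1 / e) : ℤ) : K) * u ^ (e - 1)) *
          Dfun ((n+2) / d.1) (u ^ d.1) v
  termination_by n => n
  decreasing_by
    have hd := d.2
    rw [Finset.mem_erase, Nat.mem_divisors] at hd
    have h0 : 0 < d.1 := Nat.pos_of_ne_zero (fun h => by simp [h] at hd)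
    exact Nat.div_lt_self (by omega) (by omega)

/-- `θ(d, e; u) = Σ_{d ∣ c ∣ e} μ(e/c) u^(c-d)`, the specialization `t_m = u^m` of the
`θ` polynomial on the divisibility poset of positive integers. -/
noncomputable def thetaDvd {K : Type*} [Field K] (u : K) (d e : ℕ) : K :=
  ∑ c ∈ e.divisors.filter (d ∣ ·), ((moebius (e / c) : ℤ) : K) * u ^ (c - d)

/-- `IsInvOnDvd Q ε η` says that `η` represents the inverse `Inv_Q ε` of the restriction of
`ε` to the finite subposet `Q` of the positive integers ordered by divisibility, in the
incidence algebra of `Q`: `η` is supported on pairs `a ∣ b` with `a, b ∈ Q`, and is a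
two-sided convolution inverse of `ε` on `Q`. -/
noncomputable def IsInvOnDvd {K : Type*} [Field K] (Q : Finset ℕ) (ε η : ℕ → ℕ → K) : Prop :=
  (∀ a b : ℕ, ¬(a ∈ Q ∧ b ∈ Q ∧ a ∣ b) → η a b = 0) ∧
  (∀ a ∈ Q, ∀ b ∈ Q,
    ∑ c ∈ Q.filter (fun c => a ∣ c ∧ c ∣ b), ε a c * η c b = if a = b then 1 else 0) ∧
  (∀ a ∈ Q, ∀ b ∈ Q,
    ∑ c ∈ Q.filter (fun c => a ∣ c ∧ c ∣ b), η a c * ε c b = if a = b then 1 else 0)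

namespace S11
variable {K : Type*} [Field K]

/-- Fueled chains: strictly increasing divisibility chains from `a` to `b` inside `Q`. -/
def chainsF (Q : Finset ℕ) (b : ℕ) : ℕ → ℕ → Finset (List ℕ)
  | 0, _ => ∅
  | (f+1), a =>
    if a = b then {[a]} else
      (Q.filter fun c => a ∣ c ∧ c ∣ b ∧ a < c).biUnion
        fun c => (chainsF Q b f c).image (a :: ·)

def chains (Q : Finset ℕ) (a b : ℕ) : Finset (List ℕ) := chainsF Q b (b+1) a

lemma chainsF_fuel (Q : Finset ℕ) (b : ℕ) (hb : 0 < b) :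
    ∀ f g a, b - a < f → b - a < g → chainsF Q b f a = chainsF Q b g a := by
  intro f
  induction f with
  | zero => intro g a h; omega
  | succ f ih =>
    intro g a hf hg
    match g with
    | 0 => omega
    | (g+1) =>
      by_cases hab : a = b
      · simp [chainsF, hab]
      · rw [chainsF, chainsF, if_neg hab, if_neg hab]
        apply Finset.biUnion_congr rfl
        intro c hc
        rw [Finset.mem_filter] at hc
        obtain ⟨hcQ, hac, hcb, hlt⟩ := hc
        have hcle : c ≤ b := Nat.le_of_dvd hb hcb
        rw [ih g c (by omega) (by omega)]

lemma chains_eq (Q : Finset ℕ) (a b : ℕ) (hb : 0 < b) :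
    chains Q a b = if a = b then {[a]} else
      (Q.filter fun c => a ∣ c ∧ c ∣ b ∧ a < c).biUnion
        fun c => (chains Q c b).image (a :: ·) := by
  rw [chains, chainsF]
  by_cases hab : a = b
  · simp [hab]
  · rw [if_neg hab, if_neg hab]
    apply Finset.biUnion_congr rfl
    intro c hc
    rw [Finset.mem_filter] at hc
    obtain ⟨hcQ, hac, hcb, hlt⟩ := hc
    have hcle : c ≤ b := Nat.le_of_dvd hb hcb
    rw [chains, chainsF_fuel Q b hb b (b+1) c (by omega) (by omega)]

lemma exists_cons_of_mem_chains {Q : Finset ℕ} {a b : ℕ} (hb : 0 < b) {l : List ℕ}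
    (hl : l ∈ chains Q a b) : ∃ t, l = a :: t := by
  rw [chains_eq Q a b hb] at hl
  by_cases hab : a = b
  · rw [if_pos hab, Finset.mem_singleton] at hl; exact ⟨[], hl⟩
  · rw [if_neg hab, Finset.mem_biUnion] at hl
    obtain ⟨c, _, hl⟩ := hl
    rw [Finset.mem_image] at hl
    obtain ⟨t, _, rfl⟩ := hl
    exact ⟨t, rfl⟩

lemma ne_nil_of_mem_chains {Q : Finset ℕ} {a b : ℕ} (hb : 0 < b) {l : List ℕ}
    (hl : l ∈ chains Q a b) : l ≠ [] := by
  obtain ⟨t, rfl⟩ := exists_cons_of_mem_chains hb hl; simp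

/-- Structural facts about chains. -/
lemma chains_facts {Q : Finset ℕ} {b : ℕ} (hb : 0 < b) :
    ∀ a {l : List ℕ}, l ∈ chains Q a b →
      l.Chain' (fun x y => x ∣ y ∧ x < y) ∧ l.getLast? = some b ∧
      (∀ x ∈ l, x = a ∨ (x ∈ Q ∧ x ∣ b)) ∧ a ∣ b := by
  have key : ∀ k a, b - a ≤ k → ∀ {l : List ℕ}, l ∈ chains Q a b →
      l.Chain' (fun x y => x ∣ y ∧ x < y) ∧ l.getLast? = some b ∧
      (∀ x ∈ l, x = a ∨ (x ∈ Q ∧ x ∣ b)) ∧ a ∣ b := by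
    intro k
    induction k with
    | zero =>
      intro a ha l hl
      rw [chains_eq Q a b hb] at hl
      by_cases hab : a = b
      · rw [if_pos hab, Finset.mem_singleton] at hl
        subst hl
        simp [hab, List.Chain', List.isChain_singleton]
      · exfalso
        rw [if_neg hab, Finset.mem_biUnion] at hl
        obtain ⟨c, hc, _⟩ := hl
        rw [Finset.mem_filter] at hc
        have := Nat.le_of_dvd hb hc.2.2.1
        omega
    | succ k ih =>
      intro a ha l hl
      rw [chains_eq Q a b hb] at hl
      by_cases hab : a = b
      · rw [if_pos hab, Finset.mem_singleton] at hl
        subst hl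
        simp [hab, List.Chain', List.isChain_singleton]
      · rw [if_neg hab, Finset.mem_biUnion] at hl
        obtain ⟨c, hc, hl⟩ := hl
        rw [Finset.mem_filter] at hc
        obtain ⟨hcQ, hac, hcb, hlt⟩ := hc
        rw [Finset.mem_image] at hl
        obtain ⟨t, ht, rfl⟩ := hl
        have hcle : c ≤ b := Nat.le_of_dvd hb hcb
        obtain ⟨ht1, ht2, ht3, ht4⟩ := ih c (by omega) ht
        obtain ⟨t', rfl⟩ := exists_cons_of_mem_chains hb ht
        refine ⟨?_, ?_, ?_, dvd_trans hac hcb⟩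
        · exact List.IsChain.cons_cons ⟨hac, hlt⟩ ht1
        · simpa using ht2
        · intro x hx
          rcases List.mem_cons.mp hx with rfl | hx
          · left; rfl
          · rcases ht3 x hx with rfl | h
            · right; exact ⟨hcQ, hcb⟩
            · right; exact h
  intro a l hl
  exact key (b - a) a le_rfl hl

lemma chains_nodup {Q : Finset ℕ} {a b : ℕ} (hb : 0 < b) {l : List ℕ}
    (hl : l ∈ chains Q a b) : l.Nodup := by
  have h := (chains_facts hb a hl).1
  have : l.Chain' (· < ·) := h.imp (fun _ _ h => h.2)
  have := List.isChain_iff_pairwise.mp this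
  exact this.imp (fun h => Nat.ne_of_lt h)

/-- Restriction: chains in `Q ⊆ D` are chains in `D` whose tail lies in `Q`. -/
lemma mem_chains_subset {Q D : Finset ℕ} (hQD : Q ⊆ D) {b : ℕ} (hb : 0 < b) :
    ∀ a {l : List ℕ}, (l ∈ chains Q a b ↔ l ∈ chains D a b ∧ ∀ x ∈ l.tail, x ∈ Q) := by
  have key : ∀ k a, b - a ≤ k → ∀ {l : List ℕ},
      (l ∈ chains Q a b ↔ l ∈ chains D a b ∧ ∀ x ∈ l.tail, x ∈ Q) := by
    intro k
    induction k with
    | zero =>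
      intro a ha l
      rw [chains_eq Q a b hb, chains_eq D a b hb]
      by_cases hab : a = b
      · rw [if_pos hab, if_pos hab]
        constructor
        · rintro h; rw [Finset.mem_singleton] at h; subst h; simp
        · rintro ⟨h, _⟩; exact h
      · rw [if_neg hab, if_neg hab]
        constructor
        · intro h
          rw [Finset.mem_biUnion] at h
          obtain ⟨c, hc, _⟩ := h
          rw [Finset.mem_filter] at hc
          have := Nat.le_of_dvd hb hc.2.2.1
          omega
        · rintro ⟨h, _⟩
          rw [Finset.mem_biUnion] at h
          obtain ⟨c, hc, _⟩ := h
          rw [Finset.mem_filter] at hc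
          have := Nat.le_of_dvd hb hc.2.2.1
          omega
    | succ k ih =>
      intro a ha l
      rw [chains_eq Q a b hb, chains_eq D a b hb]
      by_cases hab : a = b
      · rw [if_pos hab, if_pos hab]
        constructor
        · rintro h; rw [Finset.mem_singleton] at h; subst h; simp
        · rintro ⟨h, _⟩; exact h
      · rw [if_neg hab, if_neg hab]
        constructor
        · intro h
          rw [Finset.mem_biUnion] at h
          obtain ⟨c, hc, hl⟩ := h
          rw [Finset.mem_filter] at hc
          obtain ⟨hcQ, hac, hcb, hlt⟩ := hc
          rw [Finset.mem_image] at hl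
          obtain ⟨t, ht, rfl⟩ := hl
          have hcle : c ≤ b := Nat.le_of_dvd hb hcb
          have hD := (ih c (by omega)).mp ht
          obtain ⟨t', rfl⟩ := exists_cons_of_mem_chains hb ht
          constructor
          · rw [Finset.mem_biUnion]
            refine ⟨c, ?_, ?_⟩
            · rw [Finset.mem_filter]; exact ⟨hQD hcQ, hac, hcb, hlt⟩
            · rw [Finset.mem_image]; exact ⟨c :: t', hD.1, rfl⟩
          · intro x hx
            rw [List.tail_cons] at hx
            rcases List.mem_cons.mp hx with rfl | hx
            · exact hcQ
            · exact hD.2 x hx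
        · rintro ⟨h, htail⟩
          rw [Finset.mem_biUnion] at h
          obtain ⟨c, hc, hl⟩ := h
          rw [Finset.mem_filter] at hc
          obtain ⟨hcD, hac, hcb, hlt⟩ := hc
          rw [Finset.mem_image] at hl
          obtain ⟨t, ht, rfl⟩ := hl
          have hcle : c ≤ b := Nat.le_of_dvd hb hcb
          obtain ⟨t', rfl⟩ := exists_cons_of_mem_chains hb ht
          rw [List.tail_cons] at htail
          have hcQ : c ∈ Q := htail c List.mem_cons_self
          rw [Finset.mem_biUnion]
          refine ⟨c, ?_, ?_⟩
          · rw [Finset.mem_filter]; exact ⟨hcQ, hac, hcb, hlt⟩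
          · rw [Finset.mem_image]
            refine ⟨c :: t', ?_, rfl⟩
            refine (ih c (by omega)).mpr ⟨ht, ?_⟩
            intro x hx
            exact htail x (List.mem_of_mem_tail hx)
  intro a l
  exact key (b - a) a le_rfl

/-- Splitting a sum over chains at the first step. -/
lemma sum_chains_split {K : Type*} [Field K] {Q : Finset ℕ} {a b : ℕ} (hb : 0 < b)
    (hab : a ≠ b) (F : List ℕ → K) :
    ∑ l ∈ chains Q a b, F l =
      ∑ c ∈ Q.filter (fun c => a ∣ c ∧ c ∣ b ∧ a < c), ∑ l ∈ chains Q c b, F (a :: l) := by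
  rw [chains_eq Q a b hb, if_neg hab]
  rw [Finset.sum_biUnion]
  · apply Finset.sum_congr rfl
    intro c hc
    rw [Finset.sum_image]
    intro x _ y _ h
    injection h with h1 h2
  · intro c hc c' hc' hne
    simp only [Function.onFun, Finset.disjoint_left]
    intro x hx hx'
    rw [Finset.mem_image] at hx hx'
    obtain ⟨l, hl, rfl⟩ := hx
    obtain ⟨l', hl', heq⟩ := hx'
    have hll : l' = l := by injection heq
    subst hll
    obtain ⟨t, ht⟩ := exists_cons_of_mem_chains hb hl
    obtain ⟨t', ht'⟩ := exists_cons_of_mem_chains hb hl'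
    rw [ht] at ht'
    injection ht' with h1 _
    exact hne h1

def edgeProd (f : ℕ → ℕ → K) : List ℕ → K
  | [] => 1
  | [_] => 1
  | a :: b :: l => f a b * edgeProd f (b :: l)

@[simp] lemma edgeProd_nil (f : ℕ → ℕ → K) : edgeProd f [] = 1 := rfl
@[simp] lemma edgeProd_single (f : ℕ → ℕ → K) (a : ℕ) : edgeProd f [a] = 1 := rfl
@[simp] lemma edgeProd_cons_cons (f : ℕ → ℕ → K) (a b : ℕ) (l : List ℕ) :
    edgeProd f (a :: b :: l) = f a b * edgeProd f (b :: l) := rfl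

lemma theta_diag (u : K) {a : ℕ} (ha : 0 < a) : thetaDvd u a a = 1 := by
  unfold thetaDvd
  have : a.divisors.filter (a ∣ ·) = {a} := by
    ext c
    simp only [Finset.mem_filter, Nat.mem_divisors, Finset.mem_singleton]
    constructor
    · rintro ⟨⟨h1, h2⟩, h3⟩
      exact Nat.dvd_antisymm h1 h3
    · rintro rfl
      exact ⟨⟨dvd_rfl, ha.ne'⟩, dvd_rfl⟩
  rw [this]
  simp [Nat.div_self ha]

lemma theta_one (u : K) (d : ℕ) :
    thetaDvd u 1 d = ∑ e ∈ d.divisors, ((moebius (d / e) : ℤ) : K) * u ^ (e - 1) := by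
  unfold thetaDvd
  rw [Finset.filter_true_of_mem]
  intro c _
  exact one_dvd c

lemma theta_scale (u : K) {d : ℕ} (hd : 0 < d) (a b : ℕ) :
    thetaDvd u (d * a) (d * b) = thetaDvd (u ^ d) a b := by
  unfold thetaDvd
  rcases Nat.eq_zero_or_pos b with rfl | hb
  · simp
  refine Finset.sum_nbij' (fun c => c / d) (fun c => d * c) ?_ ?_ ?_ ?_ ?_
  · intro c hc
    rw [Finset.mem_filter, Nat.mem_divisors] at hc
    obtain ⟨⟨h1, h2⟩, h3⟩ := hc
    have hdc : d ∣ c := dvd_trans (Dvd.intro a rfl) h3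
    obtain ⟨c', rfl⟩ := hdc
    rw [Finset.mem_filter, Nat.mem_divisors]
    simp only [Nat.mul_div_cancel_left c' hd]
    refine ⟨⟨?_, hb.ne'⟩, ?_⟩
    · exact (mul_dvd_mul_iff_left hd.ne').mp h1
    · exact (mul_dvd_mul_iff_left hd.ne').mp h3
  · intro c hc
    rw [Finset.mem_filter, Nat.mem_divisors] at hc ⊢
    obtain ⟨⟨h1, h2⟩, h3⟩ := hc
    exact ⟨⟨mul_dvd_mul_left d h1, by positivity⟩, mul_dvd_mul_left d h3⟩
  · intro c hc
    rw [Finset.mem_filter, Nat.mem_divisors] at hc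
    obtain ⟨⟨h1, _⟩, h3⟩ := hc
    have hdc : d ∣ c := dvd_trans (Dvd.intro a rfl) h3
    exact Nat.mul_div_cancel' hdc
  · intro c _
    exact Nat.mul_div_cancel_left c hd
  · intro c hc
    rw [Finset.mem_filter, Nat.mem_divisors] at hc
    obtain ⟨⟨h1, _⟩, h3⟩ := hc
    have hdc : d ∣ c := dvd_trans (Dvd.intro a rfl) h3
    obtain ⟨c', rfl⟩ := hdc
    simp only [Nat.mul_div_cancel_left c' hd]
    have hac' : a ≤ c' := by
      rcases Nat.eq_zero_or_pos a with rfl | ha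
      · exact Nat.zero_le c'
      have : a ∣ c' := (mul_dvd_mul_iff_left hd.ne').mp h3
      have hc'pos : 0 < c' := by
        rcases Nat.eq_zero_or_pos c' with rfl | h
        · simp at h1; omega
        · exact h
      exact Nat.le_of_dvd hc'pos this
    rw [Nat.mul_div_mul_left _ _ hd, ← pow_mul, Nat.mul_sub]

lemma edgeProd_scale (u : K) {d : ℕ} (hd : 0 < d) :
    ∀ l : List ℕ, edgeProd (thetaDvd u) (l.map (d * ·)) = edgeProd (thetaDvd (u ^ d)) l
  | [] => by simp
  | [a] => by simp
  | a :: b :: l => by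
    rw [List.map_cons, List.map_cons, edgeProd_cons_cons, edgeProd_cons_cons,
      theta_scale u hd a b, ← List.map_cons]
    rw [edgeProd_scale u hd (b :: l)]

lemma chains_scale {d m : ℕ} (hd : 0 < d) (hm : 0 < m) :
    ∀ a, chains ((d*m).divisors) (d*a) (d*m) =
      (chains m.divisors a m).image (List.map (d * ·)) := by
  have hdm : 0 < d * m := by positivity
  have key : ∀ k a, m - a ≤ k → chains ((d*m).divisors) (d*a) (d*m) =
      (chains m.divisors a m).image (List.map (d * ·)) := by
    intro k
    induction k with
    | zero =>
      intro a ha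
      have ham : m ≤ a := by omega
      rcases eq_or_lt_of_le ham with rfl | hlt
      · rw [chains_eq _ _ _ hdm, chains_eq _ _ _ hm, if_pos rfl, if_pos rfl]
        simp
      · -- a > m : both sides empty
        have h1 : d * a ≠ d * m := by
          intro h; exact absurd (Nat.eq_of_mul_eq_mul_left hd h) (by omega)
        rw [chains_eq _ _ _ hdm, chains_eq _ _ _ hm, if_neg h1, if_neg (by omega)]
        have e1 : ((d*m).divisors.filter fun c => d*a ∣ c ∧ c ∣ d*m ∧ d*a < c) = ∅ := by
          rw [Finset.filter_eq_empty_iff]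
          intro c hc
          rw [Nat.mem_divisors] at hc
          have := Nat.le_of_dvd hdm hc.1
          rintro ⟨h1, h2, h3⟩
          have : c ≤ d * m := Nat.le_of_dvd hdm h2
          have : d * m < d * a := (mul_lt_mul_iff_right₀ hd).mpr hlt
          omega
        have e2 : (m.divisors.filter fun c => a ∣ c ∧ c ∣ m ∧ a < c) = ∅ := by
          rw [Finset.filter_eq_empty_iff]
          intro c hc
          rw [Nat.mem_divisors] at hc
          have := Nat.le_of_dvd hm hc.1
          rintro ⟨h1, h2, h3⟩
          omega
        rw [e1, e2]
        simp
    | succ k ih =>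
      intro a ha
      by_cases ham : a = m
      · subst ham
        rw [chains_eq _ _ _ hdm, chains_eq _ _ _ hm, if_pos rfl, if_pos rfl]
        simp
      · have h1 : d * a ≠ d * m := by
          intro h; exact absurd (Nat.eq_of_mul_eq_mul_left hd h) ham
        rw [chains_eq _ _ _ hdm, chains_eq _ _ _ hm, if_neg h1, if_neg ham]
        rw [Finset.biUnion_image]
        have hfil : ((d*m).divisors.filter fun c => d*a ∣ c ∧ c ∣ d*m ∧ d*a < c) =
            (m.divisors.filter fun c => a ∣ c ∧ c ∣ m ∧ a < c).image (d * ·) := by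
          ext c
          simp only [Finset.mem_filter, Nat.mem_divisors, Finset.mem_image]
          constructor
          · rintro ⟨⟨hc1, _⟩, hc2, hc3, hc4⟩
            have hdc : d ∣ c := dvd_trans (Dvd.intro a rfl) hc2
            obtain ⟨c', rfl⟩ := hdc
            refine ⟨c', ⟨⟨?_, hm.ne'⟩, ?_, ?_, ?_⟩, rfl⟩
            · exact (mul_dvd_mul_iff_left hd.ne').mp hc1
            · exact (mul_dvd_mul_iff_left hd.ne').mp hc2
            · exact (mul_dvd_mul_iff_left hd.ne').mp hc3
            · exact lt_of_mul_lt_mul_left hc4 (Nat.zero_le d)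
          · rintro ⟨c', ⟨⟨hc1, _⟩, hc2, hc3, hc4⟩, rfl⟩
            refine ⟨⟨mul_dvd_mul_left d hc1, hdm.ne'⟩, mul_dvd_mul_left d hc2,
              mul_dvd_mul_left d hc3, (mul_lt_mul_iff_right₀ hd).mpr hc4⟩
        rw [hfil, Finset.image_biUnion]
        apply Finset.biUnion_congr rfl
        intro c hc
        rw [Finset.mem_filter, Nat.mem_divisors] at hc
        obtain ⟨⟨hc1, _⟩, hc2, hc3, hc4⟩ := hc
        have hcm : c ≤ m := Nat.le_of_dvd hm hc3
        rw [ih c (by omega)]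
        rw [Finset.image_image, Finset.image_image]
        apply Finset.image_congr
        intro l _
        simp
  intro a
  exact key (m - a) a le_rfl

lemma chainSum_diag {Q : Finset ℕ} {a : ℕ} (ha : 0 < a) (u : K) :
    ∑ l ∈ chains Q a a, (-1 : K) ^ (l.length - 1) * edgeProd (thetaDvd u) l = 1 := by
  rw [chains_eq Q a a ha, if_pos rfl, Finset.sum_singleton, edgeProd_single]
  simp

lemma chainSum_not_dvd {Q : Finset ℕ} {a b : ℕ} (hb : 0 < b) (hnd : ¬ a ∣ b)
    (F : List ℕ → K) : ∑ l ∈ chains Q a b, F l = 0 := by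
  apply Finset.sum_eq_zero
  intro l hl
  exact absurd (chains_facts hb a hl).2.2.2 hnd

lemma eta_chain {Q : Finset ℕ} (hpos : ∀ x ∈ Q, 0 < x) (u : K) (η : ℕ → ℕ → K)
    (h0 : ∀ a b : ℕ, ¬(a ∈ Q ∧ b ∈ Q ∧ a ∣ b) → η a b = 0)
    (h2 : ∀ a ∈ Q, ∀ b ∈ Q,
      ∑ c ∈ Q.filter (fun c => a ∣ c ∧ c ∣ b), thetaDvd u a c * η c b
        = if a = b then 1 else 0) :
    ∀ a ∈ Q, ∀ b ∈ Q, η a b =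
      ∑ l ∈ chains Q a b, (-1 : K) ^ (l.length - 1) * edgeProd (thetaDvd u) l := by
  have hdiag : ∀ a ∈ Q, η a a = 1 := by
    intro a haQ
    have ha : 0 < a := hpos a haQ
    have h := h2 a haQ a haQ
    have hfil : Q.filter (fun c => a ∣ c ∧ c ∣ a) = {a} := by
      ext c
      simp only [Finset.mem_filter, Finset.mem_singleton]
      constructor
      · rintro ⟨hcQ, hh1, hh2⟩; exact Nat.dvd_antisymm hh2 hh1
      · rintro rfl; exact ⟨haQ, dvd_rfl, dvd_rfl⟩
    rw [hfil, Finset.sum_singleton, theta_diag u ha, one_mul, if_pos rfl] at h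
    exact h
  have key : ∀ k, ∀ a ∈ Q, ∀ b ∈ Q, b - a ≤ k → η a b =
      ∑ l ∈ chains Q a b, (-1 : K) ^ (l.length - 1) * edgeProd (thetaDvd u) l := by
    intro k
    induction k with
    | zero =>
      intro a haQ b hbQ hba
      have ha : 0 < a := hpos a haQ
      have hb : 0 < b := hpos b hbQ
      by_cases hab : a = b
      · subst hab
        rw [chainSum_diag ha u]
        exact hdiag a haQ
      · have hnd : ¬ a ∣ b := by
          intro h
          have := Nat.le_of_dvd hb h
          have := Nat.eq_of_dvd_of_lt_two_mul hb.ne' h (by omega)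
          omega
        rw [chainSum_not_dvd hb hnd]
        exact h0 a b (fun h => hnd h.2.2)
    | succ k ih =>
      intro a haQ b hbQ hba
      have ha : 0 < a := hpos a haQ
      have hb : 0 < b := hpos b hbQ
      by_cases hab : a = b
      · subst hab
        rw [chainSum_diag ha u]
        exact hdiag a haQ
      by_cases hnd : a ∣ b
      swap
      · rw [chainSum_not_dvd hb hnd]
        exact h0 a b (fun h => hnd h.2.2)
      -- main case : a ∣ b, a ≠ b
      have h := h2 a haQ b hbQ
      rw [if_neg hab] at h
      have haf : a ∈ Q.filter (fun c => a ∣ c ∧ c ∣ b) := by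
        rw [Finset.mem_filter]; exact ⟨haQ, dvd_rfl, hnd⟩
      rw [← Finset.add_sum_erase _ _ haf, theta_diag u ha, one_mul] at h
      have herase : (Q.filter (fun c => a ∣ c ∧ c ∣ b)).erase a
          = Q.filter (fun c => a ∣ c ∧ c ∣ b ∧ a < c) := by
        ext c
        simp only [Finset.mem_erase, Finset.mem_filter]
        constructor
        · rintro ⟨hca, hcQ, hh1, hh2⟩
          have hc : 0 < c := hpos c hcQ
          have := Nat.le_of_dvd hc hh1
          exact ⟨hcQ, hh1, hh2, by omega⟩
        · rintro ⟨hcQ, hh1, hh2, hh3⟩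
          exact ⟨by omega, hcQ, hh1, hh2⟩
      rw [herase] at h
      have heta : η a b = -∑ c ∈ Q.filter (fun c => a ∣ c ∧ c ∣ b ∧ a < c),
          thetaDvd u a c * η c b := eq_neg_of_add_eq_zero_left h
      rw [heta, sum_chains_split hb hab]
      rw [← Finset.sum_neg_distrib]
      apply Finset.sum_congr rfl
      intro c hc
      rw [Finset.mem_filter] at hc
      obtain ⟨hcQ, hac, hcb, hlt⟩ := hc
      have hcle : c ≤ b := Nat.le_of_dvd hb hcb
      rw [ih c hcQ b hbQ (by omega)]
      rw [← neg_one_mul, Finset.mul_sum, Finset.mul_sum]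
      apply Finset.sum_congr rfl
      intro l hl
      obtain ⟨t, rfl⟩ := exists_cons_of_mem_chains hb hl
      rw [edgeProd_cons_cons]
      simp only [List.length_cons, Nat.add_sub_cancel]
      rw [pow_succ]
      ring
  intro a ha b hb
  exact key (b - a) a ha b hb le_rfl
lemma Dfun_one (u v : K) : Dfun 1 u v = 1 := by simp [Dfun]

lemma Dfun_eq (k : ℕ) (u v : K) : Dfun (k+2) u v =
    (u ^ (k+1) - v ^ (k+1))⁻¹ *
      ∑ d ∈ ((k+2 : ℕ).divisors.erase 1),
        v ^ ((k+2) / d - 1) *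
          (∑ e ∈ d.divisors, ((moebius (d / e) : ℤ) : K) * u ^ (e - 1)) *
          Dfun ((k+2) / d) (u ^ d) v := by
  rw [Dfun]
  congr 1
  rw [← Finset.sum_attach ((k+2 : ℕ).divisors.erase 1)
    (fun d => v ^ ((k+2) / d - 1) *
      (∑ e ∈ d.divisors, ((moebius (d / e) : ℤ) : K) * u ^ (e - 1)) *
      Dfun ((k+2) / d) (u ^ d) v)]

lemma lemB : ∀ n : ℕ, 0 < n → ∀ u v : K, v ≠ 0 →
    ∑ l ∈ chains n.divisors 1 n, edgeProd (thetaDvd u) l *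
      ((l.dropLast.map fun e => (u ^ (n - e) * v ^ ((1:ℤ) - ((n / e : ℕ) : ℤ)) - 1)⁻¹).prod)
    = v ^ (n - 1) * Dfun n u v := by
  intro n
  induction n using Nat.strong_induction_on with
  | _ n IH =>
  intro hn u v hv
  rcases Nat.lt_or_ge n 2 with h2 | h2
  · -- n = 1
    have hn1 : n = 1 := by omega
    subst hn1
    rw [Nat.divisors_one, chains_eq _ _ _ hn, if_pos rfl, Finset.sum_singleton,
      edgeProd_single, Dfun_one]
    simp
  · -- n ≥ 2
    obtain ⟨k, rfl⟩ : ∃ k, n = k + 2 := ⟨n - 2, by omega⟩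
    set n := k + 2 with hnk
    have h1n : (1:ℕ) ≠ n := by omega
    set g : ℕ → K := fun e => (u ^ (n - e) * v ^ ((1:ℤ) - ((n / e : ℕ) : ℤ)) - 1)⁻¹ with hg
    rw [sum_chains_split hn h1n
      (fun l => edgeProd (thetaDvd u) l * ((l.dropLast.map g).prod))]
    have hfil : (n.divisors.filter fun c => 1 ∣ c ∧ c ∣ n ∧ 1 < c) = n.divisors.erase 1 := by
      ext c
      simp only [Finset.mem_filter, Finset.mem_erase, Nat.mem_divisors]
      constructor
      · rintro ⟨⟨hc1, hc2⟩, _, _, hc3⟩; exact ⟨by omega, hc1, hc2⟩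
      · rintro ⟨hc0, hc1, hc2⟩
        have : 0 < c := Nat.pos_of_dvd_of_pos hc1 hn
        exact ⟨⟨hc1, hc2⟩, one_dvd c, hc1, by omega⟩
    rw [hfil]
    have hvpow : v ^ ((1:ℤ) - (n : ℤ)) * v ^ ((n-1 : ℕ)) = 1 := by
      rw [← zpow_natCast v (n-1), ← zpow_add₀ hv]
      have hc : ((n-1:ℕ) : ℤ) = (n : ℤ) - 1 := by
        have := Nat.cast_sub (by omega : 1 ≤ n) (R := ℤ); simpa using this
      rw [hc, show (1:ℤ) - (n:ℤ) + ((n:ℤ) - 1) = 0 by ring, zpow_zero]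
    have hg1 : g 1 = v ^ (n-1) * (u ^ (n-1) - v ^ (n-1))⁻¹ := by
      rw [hg]
      simp only [Nat.div_one]
      have hsplit : u ^ (n - 1) * v ^ ((1:ℤ) - (n : ℤ)) - 1
          = v ^ ((1:ℤ) - (n : ℤ)) * (u ^ (n-1) - v ^ (n-1)) := by
        rw [mul_sub, hvpow]; ring
      rw [hsplit, mul_inv]
      congr 1
      exact inv_eq_of_mul_eq_one_right hvpow
    -- transform each inner sum
    have hterm : ∀ d ∈ n.divisors.erase 1,
        (∑ l ∈ chains n.divisors d n,
          edgeProd (thetaDvd u) (1 :: l) * (((1 :: l).dropLast.map g).prod))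
        = thetaDvd u 1 d * g 1 * (v ^ (n/d - 1) * Dfun (n/d) (u ^ d) v) := by
      intro d hd
      rw [Finset.mem_erase, Nat.mem_divisors] at hd
      obtain ⟨hd1, hddvd, _⟩ := hd
      have hd0 : 0 < d := Nat.pos_of_dvd_of_pos hddvd hn
      have hd2 : 2 ≤ d := by omega
      set m' := n / d with hm'
      have hnm : n = d * m' := by rw [hm', Nat.mul_div_cancel' hddvd]
      have hm0 : 0 < m' := by
        rw [hm']; exact Nat.div_pos (Nat.le_of_dvd hn hddvd) hd0
      have hml : m' < n := by
        rw [hnm]; calc m' = 1 * m' := (one_mul m').symm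
                      _ < d * m' := by exact Nat.mul_lt_mul_of_lt_of_le hd2 le_rfl hm0
      -- rewrite chains via scaling
      have hch : chains n.divisors d n = (chains m'.divisors 1 m').image (List.map (d * ·)) := by
        have := chains_scale (d := d) (m := m') hd0 hm0 1
        rw [mul_one] at this
        rw [hnm]
        exact this
      rw [hch, Finset.sum_image (by
        intro x _ y _ hxy
        exact List.map_injective_iff.mpr (mul_right_injective₀ hd0.ne') hxy)]
      have hinner : ∀ l' ∈ chains m'.divisors 1 m',
          edgeProd (thetaDvd u) (1 :: l'.map (d * ·)) * ((((1 : ℕ) :: l'.map (d * ·)).dropLast.map g).prod)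
          = thetaDvd u 1 d * g 1 *
            (edgeProd (thetaDvd (u ^ d)) l' *
              ((l'.dropLast.map fun e => ((u^d) ^ (m' - e) * v ^ ((1:ℤ) - ((m' / e : ℕ) : ℤ)) - 1)⁻¹).prod)) := by
        intro l' hl'
        have hmem : ∀ e ∈ l', e ∣ m' := by
          intro e he
          rcases ((chains_facts hm0 1 hl').2.2.1 e he) with rfl | hh
          · exact one_dvd m'
          · exact hh.2
        obtain ⟨t, rfl⟩ := exists_cons_of_mem_chains hm0 hl'
        have hmap : ((1:ℕ) :: t).map (d * ·) = d :: t.map (d * ·) := by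
          rw [List.map_cons, mul_one]
        -- edge product part
        have hedge : edgeProd (thetaDvd u) ((1:ℕ) :: ((1:ℕ) :: t).map (d * ·))
            = thetaDvd u 1 d * edgeProd (thetaDvd (u ^ d)) ((1:ℕ) :: t) := by
          rw [hmap, edgeProd_cons_cons, ← hmap, edgeProd_scale u hd0]
        -- node product part
        have hnode : (((1:ℕ) :: ((1:ℕ) :: t).map (d * ·)).dropLast.map g).prod
            = g 1 * ((((1:ℕ) :: t).dropLast.map
                fun e => ((u^d) ^ (m' - e) * v ^ ((1:ℤ) - ((m' / e : ℕ) : ℤ)) - 1)⁻¹).prod) := by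
          rw [hmap]
          have hdl : ((1:ℕ) :: d :: t.map (d * ·)).dropLast
              = 1 :: (d :: t.map (d * ·)).dropLast := rfl
          rw [hdl, ← hmap, ← List.map_dropLast, List.map_cons, List.prod_cons, List.map_map]
          congr 1
          congr 1
          apply List.map_congr_left
          intro e he
          have hel : e ∈ (1:ℕ) :: t := List.dropLast_subset _ he
          have hedvd : e ∣ m' := hmem e hel
          have hele : e ≤ m' := Nat.le_of_dvd hm0 hedvd
          simp only [Function.comp_apply, hg]
          have hh1 : n - d*e = d*(m' - e) := by rw [hnm, Nat.mul_sub]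
          have hh2 : n/(d*e) = m'/e := by rw [hnm, Nat.mul_div_mul_left _ _ hd0]
          rw [hh1, hh2, pow_mul]
        rw [hedge, hnode]
        ring
      rw [Finset.sum_congr rfl hinner, ← Finset.mul_sum, IH m' hml hm0 (u^d) v hv]
    rw [Finset.sum_congr rfl hterm]
    -- assemble with the Dfun recursion
    rw [Dfun_eq k u v]
    have hnn : n - 1 = k + 1 := by omega
    rw [← hnk]
    rw [hnn, Finset.mul_sum, Finset.mul_sum]
    apply Finset.sum_congr rfl
    intro d hd
    rw [← theta_one u d, hg1, hnn]
    ring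
/-- Inclusion–exclusion over supersets of `C` in `D`. -/
lemma superset_sum (r : ℕ → K) (D C : Finset ℕ) (hCD : C ⊆ D) :
    ∑ Q ∈ D.powerset.filter (fun Q => C ⊆ Q), (-1:K)^Q.card * ∏ e ∈ D \ Q, r e
      = (-1:K)^C.card * ∏ e ∈ D \ C, (r e - 1) := by
  have hprod : ∏ e ∈ D \ C, (r e - 1) = ∏ e ∈ D \ C, ((-1) + r e) := by
    apply Finset.prod_congr rfl; intro e _; ring
  rw [hprod, Finset.prod_add, Finset.mul_sum]
  refine Finset.sum_nbij' (fun Q => Q \ C) (fun t => C ∪ t) ?_ ?_ ?_ ?_ ?_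
  · intro Q hQ
    rw [Finset.mem_filter, Finset.mem_powerset] at hQ
    rw [Finset.mem_powerset]
    exact Finset.sdiff_subset_sdiff hQ.1 le_rfl
  · intro t ht
    rw [Finset.mem_powerset] at ht
    rw [Finset.mem_filter, Finset.mem_powerset]
    constructor
    · apply Finset.union_subset hCD
      exact ht.trans (Finset.sdiff_subset)
    · exact Finset.subset_union_left
  · intro Q hQ
    rw [Finset.mem_filter, Finset.mem_powerset] at hQ
    exact Finset.union_sdiff_of_subset hQ.2
  · intro t ht
    rw [Finset.mem_powerset] at ht
    ext x
    simp only [Finset.mem_sdiff, Finset.mem_union]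
    constructor
    · rintro ⟨h1 | h1, h2⟩
      · exact absurd h1 h2
      · exact h1
    · intro hx
      have := ht hx
      rw [Finset.mem_sdiff] at this
      exact ⟨Or.inr hx, this.2⟩
  · intro Q hQ
    rw [Finset.mem_filter, Finset.mem_powerset] at hQ
    obtain ⟨hQD, hCQ⟩ := hQ
    have hcard : Q.card = (Q \ C).card + C.card := by
      rw [Finset.card_sdiff_add_card_eq_card hCQ]
    have hset : D \ Q = (D \ C) \ (Q \ C) := by
      ext x
      simp only [Finset.mem_sdiff]
      constructor
      · rintro ⟨h1, h2⟩
        exact ⟨⟨h1, fun hc => h2 (hCQ hc)⟩, fun hc => h2 hc.1⟩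
      · rintro ⟨⟨h1, h2⟩, h3⟩
        refine ⟨h1, fun hq => h3 ⟨hq, h2⟩⟩
    rw [hcard, hset, pow_add]
    have : ∏ i ∈ Q \ C, (-1 : K) = (-1 : K)^(Q \ C).card := by
      rw [Finset.prod_const]
    rw [← this]
    ring
  done

lemma dropLast_toFinset {l : List ℕ} {n : ℕ} (hnd : l.Nodup) (hne : l ≠ [])
    (hlast : l.getLast? = some n) : l.dropLast.toFinset = l.toFinset.erase n := by
  have hl : l.dropLast ++ [l.getLast hne] = l := List.dropLast_append_getLast hne
  have hgl : l.getLast hne = n := by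
    have := List.getLast?_eq_getLast hne
    rw [hlast] at this
    injection this with h
    exact h.symm
  rw [hgl] at hl
  have hnmem : n ∉ l.dropLast := by
    intro hmem
    have := hl ▸ hnd
    rw [List.nodup_append] at this
    exact this.2.2 n hmem n (List.mem_singleton_self n) rfl
  ext x
  simp only [List.mem_toFinset, Finset.mem_erase, List.mem_toFinset]
  constructor
  · intro hx
    refine ⟨fun h => hnmem (h ▸ hx), ?_⟩
    rw [← hl]
    exact List.mem_append_left _ hx
  · rintro ⟨hxn, hx⟩
    rw [← hl] at hx
    rcases List.mem_append.mp hx with h | h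
    · exact h
    · rw [List.mem_singleton] at h
      exact absurd h hxn

lemma chains_restrict {Q D : Finset ℕ} (hQD : Q ⊆ D) {n : ℕ} (hn : 0 < n) (h1Q : 1 ∈ Q) :
    chains Q 1 n = (chains D 1 n).filter (fun l => l.toFinset ⊆ Q) := by
  ext l
  rw [Finset.mem_filter, mem_chains_subset hQD hn 1]
  constructor
  · rintro ⟨hD, htail⟩
    refine ⟨hD, ?_⟩
    intro x hx
    rw [List.mem_toFinset] at hx
    obtain ⟨t, rfl⟩ := exists_cons_of_mem_chains hn hD
    rcases List.mem_cons.mp hx with rfl | hx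
    · exact h1Q
    · exact htail x hx
  · rintro ⟨hD, hsub⟩
    refine ⟨hD, fun x hx => hsub ?_⟩
    rw [List.mem_toFinset]
    exact List.mem_of_mem_tail hx

section Conc

abbrev Quv := FractionRing (MvPolynomial (Fin 2) ℚ)

lemma alg_inj : Function.Injective (algebraMap (MvPolynomial (Fin 2) ℚ) Quv) :=
  IsFractionRing.injective _ _

lemma v_ne_zero : (algebraMap (MvPolynomial (Fin 2) ℚ) Quv) (MvPolynomial.X 1) ≠ 0 := by
  intro h
  have := alg_inj (h.trans (map_zero _).symm)
  exact MvPolynomial.X_ne_zero _ this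

lemma r_sub_one_ne_zero {n e : ℕ} (hn : 0 < n) (he : e ∈ n.divisors.erase n) :
    (algebraMap (MvPolynomial (Fin 2) ℚ) Quv (MvPolynomial.X 0)) ^ (n - e) *
      (algebraMap (MvPolynomial (Fin 2) ℚ) Quv (MvPolynomial.X 1)) ^ ((1:ℤ) - ((n / e : ℕ) : ℤ))
      - 1 ≠ 0 := by
  set u := algebraMap (MvPolynomial (Fin 2) ℚ) Quv (MvPolynomial.X 0) with hu
  set v := algebraMap (MvPolynomial (Fin 2) ℚ) Quv (MvPolynomial.X 1) with hv
  rw [Finset.mem_erase, Nat.mem_divisors] at he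
  obtain ⟨hen, hed, _⟩ := he
  have he0 : 0 < e := Nat.pos_of_dvd_of_pos hed hn
  have helt : e < n := by
    have := Nat.le_of_dvd hn hed
    omega
  intro h
  have heq : u ^ (n - e) * v ^ ((1:ℤ) - ((n / e : ℕ) : ℤ)) = 1 := by
    have := sub_eq_zero.mp h
    exact this
  have hkey : u ^ (n - e) * v = v ^ ((n / e : ℕ)) := by
    have hvne : v ≠ 0 := v_ne_zero
    have := congrArg (· * v ^ (((n / e : ℕ) : ℤ))) heq
    simp only [one_mul] at this
    rw [mul_assoc, ← zpow_add₀ hvne] at this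
    have harith : (1:ℤ) - ((n / e : ℕ) : ℤ) + ((n / e : ℕ) : ℤ) = 1 := by ring
    rw [harith, zpow_one] at this
    rw [this, zpow_natCast]
  -- transfer to polynomials
  have hpoly : (MvPolynomial.X 0 : MvPolynomial (Fin 2) ℚ) ^ (n - e) * MvPolynomial.X 1
      = (MvPolynomial.X 1 : MvPolynomial (Fin 2) ℚ) ^ (n / e) := by
    apply alg_inj
    rw [map_mul, map_pow, map_pow]
    exact hkey
  have := congrArg (MvPolynomial.eval (fun i : Fin 2 => if i = 0 then (0:ℚ) else 1)) hpoly
  simp only [map_mul, map_pow, MvPolynomial.eval_X] at this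
  norm_num at this
  rw [zero_pow (by omega : n - e ≠ 0)] at this
  simp at this

end Conc

end S11

open S11

/-- in `ℚ(u,v)` (the fraction field of `ℚ[u,v]`), for every `n ≥ 1`,
`D_n(u,v) = -(v^{1-n} / Π_{e ∣ n, e ≠ n} (r_e - 1)) ·
  Σ_{1, n ∈ Q ⊆ divisors n} (-1)^{#Q} · Inv_Q θ(1, n; u) · Π_{e ∣ n, e ∉ Q} r_e`,
where `r_e = u^{n-e} v^{1 - n/e}` and `Inv_Q θ` (represented by `η Q`) is the inverse of
the restriction of `θ(·,·;u)` to `Q` in the incidence algebra of the divisibility poset. -/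
theorem statement11 (n : ℕ) (hn : 0 < n) :
    letI Quv := FractionRing (MvPolynomial (Fin 2) ℚ)
    ∀ (u v : Quv),
      u = algebraMap (MvPolynomial (Fin 2) ℚ) Quv (MvPolynomial.X 0) →
      v = algebraMap (MvPolynomial (Fin 2) ℚ) Quv (MvPolynomial.X 1) →
      ∀ r : ℕ → Quv, (∀ e : ℕ, r e = u ^ (n - e) * v ^ ((1 : ℤ) - ((n / e : ℕ) : ℤ))) →
      ∀ η : Finset ℕ → ℕ → ℕ → Quv,
        (∀ Q ∈ n.divisors.powerset.filter (fun Q => 1 ∈ Q ∧ n ∈ Q),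
          IsInvOnDvd Q (thetaDvd u) (η Q)) →
      Dfun n u v =
        - (v ^ ((1 : ℤ) - (n : ℤ)) / ∏ e ∈ n.divisors.erase n, (r e - 1)) *
          ∑ Q ∈ n.divisors.powerset.filter (fun Q => 1 ∈ Q ∧ n ∈ Q),
            (-1 : Quv) ^ Q.card * η Q 1 n * ∏ e ∈ n.divisors \ Q, r e := by
  intro u v hu hv r hr η hη
  have hvne : v ≠ 0 := by rw [hv]; exact S11.v_ne_zero
  have h1D : 1 ∈ n.divisors := Nat.one_mem_divisors.mpr hn.ne'
  have hnD : n ∈ n.divisors := Nat.mem_divisors_self n hn.ne'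
  have hrne : ∀ e ∈ n.divisors.erase n, r e - 1 ≠ 0 := by
    intro e he
    rw [hr e, hu, hv]
    exact S11.r_sub_one_ne_zero hn he
  have hP : (∏ e ∈ n.divisors.erase n, (r e - 1)) ≠ 0 :=
    Finset.prod_ne_zero_iff.mpr hrne
  -- Step 1: per Q, rewrite η via chain sums over the full divisor poset
  have hQterm : ∀ Q ∈ n.divisors.powerset.filter (fun Q => 1 ∈ Q ∧ n ∈ Q),
      (-1 : Quv) ^ Q.card * η Q 1 n * ∏ e ∈ n.divisors \ Q, r e
      = ∑ l ∈ chains n.divisors 1 n,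
          (if l.toFinset ⊆ Q then
            ((-1 : Quv) ^ (l.length - 1) * edgeProd (thetaDvd u) l) *
              ((-1 : Quv) ^ Q.card * ∏ e ∈ n.divisors \ Q, r e)
          else 0) := by
    intro Q hQ
    have hQ' := hQ
    rw [Finset.mem_filter, Finset.mem_powerset] at hQ'
    obtain ⟨hQD, h1Q, hnQ⟩ := hQ'
    have hpos : ∀ x ∈ Q, 0 < x := fun x hx => Nat.pos_of_mem_divisors (hQD hx)
    obtain ⟨hz, hleft, _⟩ := hη Q hQ
    rw [eta_chain hpos u (η Q) hz hleft 1 h1Q n hnQ]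
    rw [chains_restrict hQD hn h1Q, Finset.sum_filter]
    rw [Finset.mul_sum, Finset.sum_mul]
    apply Finset.sum_congr rfl
    intro l _
    by_cases hsub : l.toFinset ⊆ Q
    · rw [if_pos hsub, if_pos hsub]; ring
    · rw [if_neg hsub, if_neg hsub]; ring
  rw [Finset.sum_congr rfl hQterm, Finset.sum_comm]
  -- Step 2: per chain l, inclusion–exclusion over supersets of its support
  have hlterm : ∀ l ∈ chains n.divisors 1 n,
      (∑ Q ∈ n.divisors.powerset.filter (fun Q => 1 ∈ Q ∧ n ∈ Q),
        if l.toFinset ⊆ Q then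
            ((-1 : Quv) ^ (l.length - 1) * edgeProd (thetaDvd u) l) *
              ((-1 : Quv) ^ Q.card * ∏ e ∈ n.divisors \ Q, r e)
          else 0)
      = -(edgeProd (thetaDvd u) l *
          ((∏ e ∈ n.divisors.erase n, (r e - 1)) *
            ((l.dropLast.map fun e =>
              (u ^ (n - e) * v ^ ((1:ℤ) - ((n / e : ℕ) : ℤ)) - 1)⁻¹).prod))) := by
    intro l hl
    have hfacts := chains_facts hn 1 hl
    have hnd : l.Nodup := chains_nodup hn hl
    have hne : l ≠ [] := by
      obtain ⟨t, rfl⟩ := exists_cons_of_mem_chains hn hl; simp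
    have hC1 : (1:ℕ) ∈ l.toFinset := by
      obtain ⟨t, rfl⟩ := exists_cons_of_mem_chains hn hl
      simp
    have hCn : n ∈ l.toFinset := by
      rw [List.mem_toFinset]
      have := List.getLast?_eq_getLast hne
      rw [hfacts.2.1] at this
      injection this with hgl
      rw [hgl]
      exact List.getLast_mem hne
    have hCD : l.toFinset ⊆ n.divisors := by
      intro x hx
      rw [List.mem_toFinset] at hx
      rcases hfacts.2.2.1 x hx with rfl | ⟨hxQ, _⟩
      · exact h1D
      · exact hxQ
    rw [← Finset.sum_filter]
    have hAfil : (n.divisors.powerset.filter (fun Q => 1 ∈ Q ∧ n ∈ Q)).filter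
        (fun Q => l.toFinset ⊆ Q)
        = n.divisors.powerset.filter (fun Q => l.toFinset ⊆ Q) := by
      rw [Finset.filter_filter]
      apply Finset.filter_congr
      intro Q _
      constructor
      · rintro ⟨_, h⟩; exact h
      · intro h; exact ⟨⟨h hC1, h hCn⟩, h⟩
    rw [hAfil]
    rw [← Finset.mul_sum, superset_sum r n.divisors l.toFinset hCD]
    -- compute the sign
    have hcard : l.toFinset.card = l.length := List.toFinset_card_of_nodup hnd
    have hsign : ((-1 : Quv) ^ (l.length - 1)) * ((-1 : Quv) ^ l.toFinset.card) = -1 := by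
      rw [hcard]
      obtain ⟨t, rfl⟩ := exists_cons_of_mem_chains hn hl
      simp only [List.length_cons, Nat.add_sub_cancel]
      rw [← pow_add, show t.length + (t.length + 1) = 2 * t.length + 1 by ring,
        pow_succ, pow_mul]
      norm_num
    -- compute the product over the complement
    have hBsub : l.toFinset.erase n ⊆ n.divisors.erase n :=
      Finset.erase_subset_erase _ hCD
    have hsd : n.divisors \ l.toFinset = (n.divisors.erase n) \ (l.toFinset.erase n) := by
      ext x
      simp only [Finset.mem_sdiff, Finset.mem_erase]
      constructor
      · rintro ⟨h1, h2⟩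
        refine ⟨⟨fun hx => h2 (hx ▸ hCn), h1⟩, fun hc => h2 hc.2⟩
      · rintro ⟨⟨h1, h2⟩, h3⟩
        refine ⟨h2, fun hc => h3 ⟨h1, hc⟩⟩
    have hBne : (∏ e ∈ l.toFinset.erase n, (r e - 1)) ≠ 0 :=
      Finset.prod_ne_zero_iff.mpr (fun e he => hrne e (hBsub he))
    have hprod : ∏ e ∈ n.divisors \ l.toFinset, (r e - 1)
        = (∏ e ∈ n.divisors.erase n, (r e - 1)) *
          ((l.dropLast.map fun e =>
            (u ^ (n - e) * v ^ ((1:ℤ) - ((n / e : ℕ) : ℤ)) - 1)⁻¹).prod) := by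
      have hps := Finset.prod_sdiff (f := fun e => r e - 1) hBsub
      have h1 : ∏ e ∈ n.divisors \ l.toFinset, (r e - 1)
          = (∏ e ∈ n.divisors.erase n, (r e - 1)) *
            (∏ e ∈ l.toFinset.erase n, (r e - 1))⁻¹ := by
        rw [hsd, ← hps]
        field_simp
      rw [h1]
      congr 1
      rw [← Finset.prod_inv_distrib]
      have hdrop : l.toFinset.erase n = l.dropLast.toFinset :=
        (dropLast_toFinset hnd hne hfacts.2.1).symm
      rw [hdrop, List.prod_toFinset _ (List.Sublist.nodup (List.dropLast_sublist l) hnd)]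
      apply congrArg
      apply List.map_congr_left
      intro e _
      rw [hr e]
    rw [hprod]
    calc ((-1 : Quv) ^ (l.length - 1) * edgeProd (thetaDvd u) l) *
          ((-1 : Quv) ^ l.toFinset.card *
            ((∏ e ∈ n.divisors.erase n, (r e - 1)) *
              ((l.dropLast.map fun e =>
                (u ^ (n - e) * v ^ ((1:ℤ) - ((n / e : ℕ) : ℤ)) - 1)⁻¹).prod)))
        = (((-1 : Quv) ^ (l.length - 1)) * ((-1 : Quv) ^ l.toFinset.card)) *
            (edgeProd (thetaDvd u) l *
            ((∏ e ∈ n.divisors.erase n, (r e - 1)) *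
              ((l.dropLast.map fun e =>
                (u ^ (n - e) * v ^ ((1:ℤ) - ((n / e : ℕ) : ℤ)) - 1)⁻¹).prod))) := by ring
      _ = _ := by rw [hsign]; ring
  rw [Finset.sum_congr rfl hlterm]
  -- Step 3: apply the chain-sum formula for Dfun
  have hsum : ∑ l ∈ chains n.divisors 1 n,
      -(edgeProd (thetaDvd u) l *
        ((∏ e ∈ n.divisors.erase n, (r e - 1)) *
          ((l.dropLast.map fun e =>
            (u ^ (n - e) * v ^ ((1:ℤ) - ((n / e : ℕ) : ℤ)) - 1)⁻¹).prod)))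
      = -((∏ e ∈ n.divisors.erase n, (r e - 1)) * (v ^ (n - 1) * Dfun n u v)) := by
    rw [← lemB n hn u v hvne]
    rw [Finset.mul_sum, ← Finset.sum_neg_distrib]
    apply Finset.sum_congr rfl
    intro l _
    ring
  rw [hsum]
  -- Step 4: final algebra
  have hvpow : v ^ ((1:ℤ) - (n : ℤ)) * v ^ ((n-1 : ℕ)) = 1 := by
    rw [← zpow_natCast v (n-1), ← zpow_add₀ hvne]
    have hc : ((n-1:ℕ) : ℤ) = (n : ℤ) - 1 := by
      have := Nat.cast_sub (by omega : 1 ≤ n) (R := ℤ); simpa using this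
    rw [hc, show (1:ℤ) - (n:ℤ) + ((n:ℤ) - 1) = 0 by ring, zpow_zero]
  rw [neg_mul_neg, div_mul_eq_mul_div]
  rw [show v ^ ((1:ℤ) - (n : ℤ)) *
      ((∏ e ∈ n.divisors.erase n, (r e - 1)) * (v ^ (n - 1) * Dfun n u v))
      = (v ^ ((1:ℤ) - (n : ℤ)) * v ^ ((n-1 : ℕ))) * Dfun n u v *
        (∏ e ∈ n.divisors.erase n, (r e - 1)) by ring]
  rw [hvpow, one_mul, mul_div_assoc, div_self hP, mul_one]
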